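/- Let Λ be a finite simple graph and let A, B be sets of vertices. Then the pair (Mincut_Λ(A,B), <), where < is the relation Φ₁ < Φ₂ iff Φ₁^A ⊆ Φ₂^A and Φ₁ ≠ Φ₂, is an admissible pair for Λ. -/

import Mathlib

universe u

/-- `C` separates `A` from `B` in the graph `G`: every vertex of `A \ C` and every vertex of
`B \ C` lie in different connected components of the subgraph induced on the complement of `C`. -/
def Separates {V : Type u} (G : SimpleGraph V) (A B C : Set V) : Prop :=
  ∀ x (hx : x ∈ A \ C) y (hy : y ∈ B \ C),
    ¬ (G.induce Cᶜ).Reachable ⟨x, hx.2⟩ ⟨y, hy.2⟩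

/-- `C` is a minimal cut between `A` and `B`: it separates `A` from `B` and no proper subset
of `C` does. -/
def IsMincutBetween {V : Type u} (G : SimpleGraph V) (A B C : Set V) : Prop :=
  Separates G A B C ∧ ∀ C' ⊆ C, C' ≠ C → ¬ Separates G A B C'

/-- The collection of all minimal cuts between `A` and `B` in `G`. -/
def Mincut {V : Type u} (G : SimpleGraph V) (A B : Set V) : Set (Set V) :=
  {C | IsMincutBetween G A B C}

/-- `Φ^A`: the union of those connected components of the induced subgraph on the complement of
`Φ` that contain at least one vertex of `A \ Φ`. -/
def sideOf {V : Type u} (G : SimpleGraph V) (A Φ : Set V) : Set V :=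
  {v | ∃ (hv : v ∉ Φ), ∃ x, ∃ (hx : x ∈ A \ Φ),
    (G.induce Φᶜ).Reachable ⟨v, hv⟩ ⟨x, hx.2⟩}

/-- The reflexivization `x ≼ y` of a strict relation `R`. -/
def RLe {α : Type*} (R : α → α → Prop) (x y : α) : Prop := R x y ∨ x = y

/-- `j` is a join (least upper bound) of `x` and `y` for the strict relation `R`. -/
def IsJoinOf {α : Type*} (R : α → α → Prop) (x y j : α) : Prop :=
  RLe R x j ∧ RLe R y j ∧ ∀ u, RLe R x u → RLe R y u → RLe R j u

/-- `m` is a meet (greatest lower bound) of `x` and `y` for the strict relation `R`. -/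
def IsMeetOf {α : Type*} (R : α → α → Prop) (x y m : α) : Prop :=
  RLe R m x ∧ RLe R m y ∧ ∀ u, RLe R u x → RLe R u y → RLe R u m

/-- An admissible pair `(Q, lt)` for the graph `G`: `Q` is a collection of vertex sets and `lt`
is a strict partial order on `Q` such that minimal cuts between comparable members of `Q` again
belong to `Q` and lie between them, middle elements of chains separate, and upper/lower bounded
pairs have joins/meets contained in the union. -/
structure AdmissiblePair {V : Type u} (G : SimpleGraph V) (Q : Set (Set V))
    (lt : Set V → Set V → Prop) : Prop where
  irrefl : ∀ A ∈ Q, ¬ lt A A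
  trans : ∀ A ∈ Q, ∀ B ∈ Q, ∀ C ∈ Q, lt A B → lt B C → lt A C
  mincut_mem : ∀ A ∈ Q, ∀ B ∈ Q, (lt A B ∨ lt B A) → ∀ C ∈ Mincut G A B,
    C ∈ Q ∧ ((RLe lt A C ∧ RLe lt C B) ∨ (RLe lt B C ∧ RLe lt C A))
  btw_separates : ∀ A ∈ Q, ∀ B ∈ Q, ∀ C ∈ Q, lt A B → lt B C → Separates G A C B
  join_exists : ∀ A ∈ Q, ∀ B ∈ Q, (∃ U ∈ Q, RLe lt A U ∧ RLe lt B U) →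
    ∃ J ∈ Q, J ⊆ A ∪ B ∧ RLe lt A J ∧ RLe lt B J ∧
      ∀ U ∈ Q, RLe lt A U → RLe lt B U → RLe lt J U
  meet_exists : ∀ A ∈ Q, ∀ B ∈ Q, (∃ U ∈ Q, RLe lt U A ∧ RLe lt U B) →
    ∃ M ∈ Q, M ⊆ A ∪ B ∧ RLe lt M A ∧ RLe lt M B ∧
      ∀ U ∈ Q, RLe lt U A → RLe lt U B → RLe lt U M

namespace MincutAux

variable {V : Type u} {G : SimpleGraph V}

/-- One step of a walk avoiding `C`. -/
def Stp (G : SimpleGraph V) (C : Set V) (a b : V) : Prop := G.Adj a b ∧ a ∉ C ∧ b ∉ C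

/-- Connectivity in the complement of `C`, as a relation on ambient vertices. -/
def Conn (G : SimpleGraph V) (C : Set V) (x y : V) : Prop :=
  x ∉ C ∧ y ∉ C ∧ Relation.ReflTransGen (Stp G C) x y

lemma Conn.refl {C : Set V} {x : V} (h : x ∉ C) : Conn G C x x :=
  ⟨h, h, Relation.ReflTransGen.refl⟩

lemma Conn.symm {C : Set V} {x y : V} (h : Conn G C x y) : Conn G C y x :=
  ⟨h.2.1, h.1, (haveI : Std.Symm (Stp G C) := ⟨fun _ _ hab => ⟨hab.1.symm, hab.2.2, hab.2.1⟩⟩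
    Std.Symm.symm _ _ h.2.2)⟩

lemma Conn.trans {C : Set V} {x y z : V} (h : Conn G C x y) (h' : Conn G C y z) :
    Conn G C x z := ⟨h.1, h'.2.1, h.2.2.trans h'.2.2⟩

lemma Conn.single {C : Set V} {x y : V} (adj : G.Adj x y) (hx : x ∉ C) (hy : y ∉ C) :
    Conn G C x y := ⟨hx, hy, Relation.ReflTransGen.single ⟨adj, hx, hy⟩⟩

lemma Conn.anti {C D : Set V} {x y : V} (hCD : C ⊆ D) (h : Conn G D x y) : Conn G C x y :=
  ⟨fun hc => h.1 (hCD hc), fun hc => h.2.1 (hCD hc),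
    Relation.ReflTransGen.mono (fun _ _ st => ⟨st.1, fun hc => st.2.1 (hCD hc), fun hc => st.2.2 (hCD hc)⟩) _ _ h.2.2⟩

lemma Conn.invariant {C : Set V} {x y : V} {I : Set V}
    (hcl : ∀ a ∈ I, ∀ b, G.Adj a b → b ∉ C → b ∈ I) (h : Conn G C x y) (hx : x ∈ I) :
    y ∈ I := by
  obtain ⟨-, -, r⟩ := h
  induction r with
  | refl => exact hx
  | tail _ st ih => exact hcl _ ih _ st.1 st.2.2

lemma Conn.transfer {X C : Set V} {x y : V} {I : Set V}
    (hcl : ∀ a ∈ I, ∀ b, G.Adj a b → b ∉ X → b ∈ I)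
    (hC : ∀ a ∈ I, a ∉ X → a ∉ C) (h : Conn G X x y) (hx : x ∈ I) : Conn G C x y := by
  obtain ⟨hx', hy', r⟩ := h
  have key : ∀ z, Relation.ReflTransGen (Stp G X) x z → z ∉ X → z ∈ I ∧ Conn G C x z := by
    intro z r
    induction r with
    | refl => exact fun _ => ⟨hx, Conn.refl (hC _ hx hx')⟩
    | @tail b c rb st ih =>
        intro _
        obtain ⟨hbI, hcb⟩ := ih st.2.1
        have hcI : c ∈ I := hcl _ hbI _ st.1 st.2.2
        exact ⟨hcI, hcb.trans (Conn.single st.1 (hC _ hbI st.2.1) (hC _ hcI st.2.2))⟩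
  exact (key y r hy').2

lemma Conn.splitD {C : Set V} {x y : V} (h : Conn G C x y) (D : Set V) :
    (∃ z ∈ D, z ∉ C ∧ Conn G C x z ∧ Conn G C z y) ∨ Conn G (C ∪ D) x y := by
  obtain ⟨hx, hy, r⟩ := h
  have key : ∀ z, Relation.ReflTransGen (Stp G C) x z → z ∉ C →
      (∃ w ∈ D, w ∉ C ∧ Conn G C x w ∧ Conn G C w z) ∨ Conn G (C ∪ D) x z := by
    intro z r
    induction r with
    | refl =>
        intro _
        by_cases hxD : x ∈ D
        · exact Or.inl ⟨x, hxD, hx, Conn.refl hx, Conn.refl hx⟩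
        · exact Or.inr (Conn.refl (by simp [hx, hxD]))
    | @tail b c rb st ih =>
        intro hc
        have hb : b ∉ C := st.2.1
        rcases ih hb with ⟨w, hwD, hwC, c1, c2⟩ | cb
        · exact Or.inl ⟨w, hwD, hwC, c1, c2.trans (Conn.single st.1 hb hc)⟩
        · by_cases hcD : c ∈ D
          · exact Or.inl ⟨c, hcD, hc,
              (cb.anti Set.subset_union_left).trans (Conn.single st.1 hb hc), Conn.refl hc⟩
          · exact Or.inr (cb.trans (Conn.single st.1 cb.2.1 (by simp [hc, hcD])))
  exact key y r hy

lemma Conn.tailSplit {C : Set V} {x y : V} (h : Conn G C x y) {D : Set V} (hxD : x ∈ D) :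
    ∃ z ∈ D, z ∉ C ∧ Conn G C x z ∧
      (z = y ∨ ∃ w, G.Adj z w ∧ w ∉ C ∪ D ∧ Conn G (C ∪ D) w y) := by
  obtain ⟨hx, hy, r⟩ := h
  have key : ∀ z, Relation.ReflTransGen (Stp G C) x z → z ∉ C →
      Conn G C x z ∧ ∃ z' ∈ D, z' ∉ C ∧ Conn G C x z' ∧
        (z' = z ∨ ∃ w, G.Adj z' w ∧ w ∉ C ∪ D ∧ Conn G (C ∪ D) w z) := by
    intro z r
    induction r with
    | refl =>
        exact fun _ => ⟨Conn.refl hx, x, hxD, hx, Conn.refl hx, Or.inl rfl⟩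
    | @tail b c rb st ih =>
        intro hc
        have hb : b ∉ C := st.2.1
        obtain ⟨cxb, z', hz'D, hz'C, cxz', rest⟩ := ih hb
        have cxc : Conn G C x c := cxb.trans (Conn.single st.1 hb hc)
        by_cases hcD : c ∈ D
        · exact ⟨cxc, c, hcD, hc, cxc, Or.inl rfl⟩
        · refine ⟨cxc, z', hz'D, hz'C, cxz', Or.inr ?_⟩
          rcases rest with rfl | ⟨w, adj, hw, cwb⟩
          · exact ⟨c, st.1, by simp [hc, hcD], Conn.refl (by simp [hc, hcD])⟩
          · exact ⟨w, adj, hw, cwb.trans (Conn.single st.1 cwb.2.1 (by simp [hc, hcD]))⟩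
  obtain ⟨-, z', h1, h2, h3, h4⟩ := key y r hy
  exact ⟨z', h1, h2, h3, h4⟩

lemma conn_iff_reachable {C : Set V} {x y : V} (hx : x ∉ C) (hy : y ∉ C) :
    Conn G C x y ↔ (G.induce Cᶜ).Reachable ⟨x, hx⟩ ⟨y, hy⟩ := by
  constructor
  · rintro ⟨-, -, r⟩
    have key : ∀ z (hz : Relation.ReflTransGen (Stp G C) x z) (hzC : z ∉ C),
        (G.induce Cᶜ).Reachable ⟨x, hx⟩ ⟨z, hzC⟩ := by
      intro z hz
      induction hz with
      | refl => exact fun _ => SimpleGraph.Reachable.refl _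
      | @tail b c rb st ih =>
          intro hzC
          exact (ih st.2.1).trans (SimpleGraph.Adj.reachable (by simp [st.1]))
    exact key y r hy
  · intro hr
    have key : ∀ (e f : (Cᶜ : Set V)),
        Relation.ReflTransGen (G.induce Cᶜ).Adj e f → Conn G C e.val f.val := by
      intro e f r
      induction r with
      | refl => exact Conn.refl e.2
      | @tail b c rb st ih =>
          exact ih.trans (Conn.single (by simpa using st) b.2 c.2)
    exact key _ _ ((SimpleGraph.reachable_iff_reflTransGen _ _).mp hr)


lemma separates_iff {A B C : Set V} :
    Separates G A B C ↔ ∀ x ∈ A, x ∉ C → ∀ y ∈ B, y ∉ C → ¬ Conn G C x y := by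
  constructor
  · intro h x hxA hxC y hyB hyC hc
    exact h x ⟨hxA, hxC⟩ y ⟨hyB, hyC⟩ ((conn_iff_reachable hxC hyC).mp hc)
  · intro h x hx y hy hr
    exact h x hx.1 hx.2 y hy.1 hy.2 ((conn_iff_reachable hx.2 hy.2).mpr hr)

lemma mem_sideOf {A Φ : Set V} {v : V} :
    v ∈ sideOf G A Φ ↔ v ∉ Φ ∧ ∃ a ∈ A, a ∉ Φ ∧ Conn G Φ v a := by
  constructor
  · rintro ⟨hv, a, ha, hr⟩
    exact ⟨hv, a, ha.1, ha.2, (conn_iff_reachable hv ha.2).mpr hr⟩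
  · rintro ⟨hv, a, haA, haΦ, hc⟩
    exact ⟨hv, a, ⟨haA, haΦ⟩, (conn_iff_reachable hv haΦ).mp hc⟩

lemma sideOf_not_mem {A Φ : Set V} {v : V} (h : v ∈ sideOf G A Φ) : v ∉ Φ :=
  (mem_sideOf.mp h).1

lemma mem_sideOf_self {A Φ : Set V} {a : V} (haA : a ∈ A) (haΦ : a ∉ Φ) :
    a ∈ sideOf G A Φ := mem_sideOf.mpr ⟨haΦ, a, haA, haΦ, Conn.refl haΦ⟩

lemma sideOf_conn_closed {A Φ : Set V} {v w : V} (hv : v ∈ sideOf G A Φ)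
    (h : Conn G Φ v w) : w ∈ sideOf G A Φ := by
  obtain ⟨hvΦ, a, haA, haΦ, hc⟩ := mem_sideOf.mp hv
  exact mem_sideOf.mpr ⟨h.2.1, a, haA, haΦ, h.symm.trans hc⟩

lemma sideOf_adj_closed {A Φ : Set V} {v w : V} (hv : v ∈ sideOf G A Φ)
    (adj : G.Adj v w) (hw : w ∉ Φ) : w ∈ sideOf G A Φ :=
  sideOf_conn_closed hv (Conn.single adj (sideOf_not_mem hv) hw)

/-- The `A`-side and `B`-side of a separating set are disjoint. -/
lemma sides_disjoint {A B C : Set V} (hsep : Separates G A B C) {v : V}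
    (hA : v ∈ sideOf G A C) (hB : v ∈ sideOf G B C) : False := by
  obtain ⟨hvC, a, haA, haC, hca⟩ := mem_sideOf.mp hA
  obtain ⟨-, b, hbB, hbC, hcb⟩ := mem_sideOf.mp hB
  exact separates_iff.mp hsep a haA haC b hbB hbC (hca.symm.trans hcb)

lemma separates_symm {A B C : Set V} (h : Separates G A B C) : Separates G B A C := by
  rw [separates_iff] at h ⊢
  exact fun x hx hxC y hy hyC hc => h y hy hyC x hx hxC hc.symm

lemma mincut_symm {A B C : Set V} (h : C ∈ Mincut G A B) : C ∈ Mincut G B A :=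
  ⟨separates_symm h.1, fun C' hsub hne hsep => h.2 C' hsub hne (separates_symm hsep)⟩

lemma separates_mono {A B C D : Set V} (hCD : C ⊆ D) (h : Separates G A B C) :
    Separates G A B D := by
  rw [separates_iff] at h ⊢
  exact fun x hx hxD y hy hyD hc => h x hx (fun t => hxD (hCD t)) y hy (fun t => hyD (hCD t))
    (hc.anti hCD)

/-- Minimality: each vertex of a minimal cut has a neighbour on the `A`-side, or lies in `A`. -/
lemma exists_nbr_side {A B Φ : Set V} (hΦ : Φ ∈ Mincut G A B) {v : V} (hv : v ∈ Φ) :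
    v ∈ A ∨ ∃ u, G.Adj v u ∧ u ∈ sideOf G A Φ := by
  have hne : Φ \ {v} ≠ Φ := by
    intro h
    have : v ∈ Φ \ {v} := h.symm ▸ hv
    exact this.2 rfl
  have hnot := hΦ.2 (Φ \ {v}) Set.diff_subset hne
  rw [separates_iff] at hnot
  push_neg at hnot
  obtain ⟨x, hxA, hxC, y, hyB, hyC, hc⟩ := hnot
  have hΦsub : Φ ⊆ (Φ \ {v}) ∪ {v} := by
    intro t ht
    by_cases htv : t = v
    · exact Or.inr htv
    · exact Or.inl ⟨ht, htv⟩
  by_cases hxv : x = v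
  · exact Or.inl (hxv ▸ hxA)
  · have hxΦ : x ∉ Φ := fun h => hxC ⟨h, hxv⟩
    rcases hc.splitD {v} with ⟨z, hz, hzC, cxz, -⟩ | cfull
    · rw [Set.mem_singleton_iff] at hz; subst hz
      obtain ⟨z', hz', hz'C, -, rest⟩ := cxz.symm.tailSplit (Set.mem_singleton _)
      rw [Set.mem_singleton_iff] at hz'; subst hz'
      rcases rest with rfl | ⟨w, adj, hw, cw⟩
      · exact absurd rfl hxv
      · refine Or.inr ⟨w, adj, ?_⟩
        have cw' : Conn G Φ w x := cw.anti hΦsub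
        exact mem_sideOf.mpr ⟨cw'.1, x, hxA, hxΦ, cw'⟩
    · have hcf : Conn G Φ x y := cfull.anti hΦsub
      exact absurd hcf (separates_iff.mp hΦ.1 x hxA hcf.1 y hyB hcf.2.1)

lemma exists_nbr_sideB {A B Φ : Set V} (hΦ : Φ ∈ Mincut G A B) {v : V} (hv : v ∈ Φ) :
    v ∈ B ∨ ∃ u, G.Adj v u ∧ u ∈ sideOf G B Φ :=
  exists_nbr_side (mincut_symm hΦ) hv

/-- If `side_A Φ ⊆ side_A Ψ` then `Φ ⊆ Ψ ∪ side_A Ψ`. -/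
lemma subset_of_side_subset {A B Φ Ψ : Set V} (hΦ : Φ ∈ Mincut G A B)
    (hs : sideOf G A Φ ⊆ sideOf G A Ψ) : Φ ⊆ Ψ ∪ sideOf G A Ψ := by
  intro v hv
  by_cases hvΨ : v ∈ Ψ
  · exact Or.inl hvΨ
  · rcases exists_nbr_side hΦ hv with hvA | ⟨u, adj, hu⟩
    · exact Or.inr (mem_sideOf_self hvA hvΨ)
    · exact Or.inr (sideOf_adj_closed (hs hu) adj.symm hvΨ)

/-- Duality: `side_A Φ ⊆ side_A Ψ` implies `side_B Ψ ⊆ side_B Φ`. -/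
lemma sideB_anti {A B Φ Ψ : Set V} (hΦ : Φ ∈ Mincut G A B) (hΨ : Ψ ∈ Mincut G A B)
    (hs : sideOf G A Φ ⊆ sideOf G A Ψ) : sideOf G B Ψ ⊆ sideOf G B Φ := by
  intro w hw
  obtain ⟨hwΨ, b, hbB, hbΨ, hc⟩ := mem_sideOf.mp hw
  rcases hc.splitD Φ with ⟨z, hzΦ, hzΨ, -, czb⟩ | cfull
  · have hzS : z ∈ sideOf G A Ψ := (subset_of_side_subset hΦ hs hzΦ).resolve_left hzΨ
    have hbS : b ∈ sideOf G A Ψ := sideOf_conn_closed hzS czb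
    obtain ⟨-, a, haA, haΨ, cba⟩ := mem_sideOf.mp hbS
    exact absurd cba.symm
      (separates_iff.mp hΨ.1 a haA haΨ b hbB hbΨ)
  · have hcf : Conn G Φ w b := cfull.anti Set.subset_union_right
    exact mem_sideOf.mpr ⟨hcf.1, b, hbB, hcf.2.1, hcf⟩

lemma subset_of_side_subset' {A B Φ Ψ : Set V} (hΦ : Φ ∈ Mincut G A B)
    (hΨ : Ψ ∈ Mincut G A B) (hs : sideOf G A Φ ⊆ sideOf G A Ψ) :
    Ψ ⊆ Φ ∪ sideOf G B Φ :=
  subset_of_side_subset (mincut_symm hΨ) (sideB_anti hΦ hΨ hs)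

/-- A minimal cut is determined by its `A`-side. -/
lemma side_inj {A B Φ Ψ : Set V} (hΦ : Φ ∈ Mincut G A B) (hΨ : Ψ ∈ Mincut G A B)
    (h : sideOf G A Φ = sideOf G A Ψ) : Φ = Ψ := by
  have key : ∀ Φ' Ψ', Φ' ∈ Mincut G A B → sideOf G A Φ' = sideOf G A Ψ' → Φ' ⊆ Ψ' := by
    intro Φ' Ψ' hΦ' h' v hv
    by_contra hvΨ
    rcases exists_nbr_side hΦ' hv with hvA | ⟨u, adj, hu⟩
    · have : v ∈ sideOf G A Φ' := h' ▸ mem_sideOf_self hvA hvΨ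
      exact sideOf_not_mem this hv
    · have : v ∈ sideOf G A Φ' := h' ▸ sideOf_adj_closed (h' ▸ hu) adj.symm hvΨ
      exact sideOf_not_mem this hv
  exact Set.Subset.antisymm (key Φ Ψ hΦ h) (key Ψ Φ hΨ h.symm)


/-- **Key lemma**: a minimal cut between two comparable minimal `(A,B)`-cuts is itself a
minimal `(A,B)`-cut lying between them. -/
lemma mincutMem {A B Φ Ψ C : Set V} (hΦ : Φ ∈ Mincut G A B) (hΨ : Ψ ∈ Mincut G A B)
    (hs : sideOf G A Φ ⊆ sideOf G A Ψ) (hC : C ∈ Mincut G Φ Ψ) :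
    C ∈ Mincut G A B ∧ sideOf G A Φ ⊆ sideOf G A C ∧ sideOf G A C ⊆ sideOf G A Ψ := by
  have hC' : IsMincutBetween G Φ Ψ C := hC
  have hΦ' : IsMincutBetween G A B Φ := hΦ
  have hΨ' : IsMincutBetween G A B Ψ := hΨ
  have hΦΨsub : Φ ⊆ Ψ ∪ sideOf G A Ψ := subset_of_side_subset hΦ hs
  have hΨΦsub : Ψ ⊆ Φ ∪ sideOf G B Φ := subset_of_side_subset' hΦ hΨ hs
  have hΦΨC : ∀ v, v ∈ Φ → v ∈ Ψ → v ∈ C := by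
    intro v hv1 hv2
    by_contra hvC
    exact separates_iff.mp hC'.1 v hv1 hvC v hv2 hvC (Conn.refl hvC)
  -- (i) C separates A from B
  have sepC : Separates G A B C := by
    rw [separates_iff]
    intro a haA haC b hbB hbC hc
    rcases hc.splitD Φ with ⟨z₁, hz₁Φ, hz₁C, -, cz₁b⟩ | cf₁
    · rcases hc.splitD Ψ with ⟨z₂, hz₂Ψ, hz₂C, -, cz₂b⟩ | cf₂
      · exact separates_iff.mp hC'.1 z₁ hz₁Φ hz₁C z₂ hz₂Ψ hz₂C (cz₁b.trans cz₂b.symm)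
      · have hcf : Conn G Ψ a b := cf₂.anti Set.subset_union_right
        exact separates_iff.mp hΨ'.1 a haA hcf.1 b hbB hcf.2.1 hcf
    · have hcf : Conn G Φ a b := cf₁.anti Set.subset_union_right
      exact separates_iff.mp hΦ'.1 a haA hcf.1 b hbB hcf.2.1 hcf
  -- (ii) C is contained in the region between Φ and Ψ
  set R : Set V := (Φ ∪ Ψ) ∪ (sideOf G B Φ ∩ sideOf G A Ψ) with hR
  have hDsep : Separates G Φ Ψ (C ∩ R) := by
    rw [separates_iff]
    intro p hpΦ hpD q hqΨ hqD hc
    obtain ⟨z, hzΦ, hzD, -, rest⟩ := hc.tailSplit hpΦ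
    have hzC : z ∉ C := fun h => hzD ⟨h, Or.inl (Or.inl hzΦ)⟩
    rcases rest with rfl | ⟨w, adjzw, hw, cwq⟩
    · have hqC : z ∉ C := fun h => hqD ⟨h, Or.inl (Or.inr hqΨ)⟩
      exact hqC (hΦΨC z hzΦ hqΨ)
    · obtain ⟨z₂, hz₂Ψ, hz₂DΦ, -, rest₂⟩ := cwq.symm.tailSplit hqΨ
      have hz₂C : z₂ ∉ C := fun h => hz₂DΦ (Or.inl ⟨h, Or.inl (Or.inr hz₂Ψ)⟩)
      have hz₂Φ : z₂ ∉ Φ := fun h => hz₂DΦ (Or.inr h)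
      have hzΨ : z ∉ Ψ := fun h => hzC (hΦΨC z hzΦ h)
      have hzSΨ : z ∈ sideOf G A Ψ := (hΦΨsub hzΦ).resolve_left hzΨ
      have hz₂TΦ : z₂ ∈ sideOf G B Φ := (hΨΦsub hz₂Ψ).resolve_left hz₂Φ
      rcases rest₂ with rfl | ⟨w₂, adjz₂w₂, hw₂, cw₂w⟩
      · have hwC : z₂ ∉ C := fun h => hw (Or.inl ⟨h, Or.inl (Or.inr hz₂Ψ)⟩)
        exact separates_iff.mp hC'.1 z hzΦ hzC z₂ hz₂Ψ hwC (Conn.single adjzw hzC hwC)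
      · have hwX : w ∉ C ∩ R ∪ Φ ∪ Ψ := cw₂w.2.1
        have hwΨ : w ∉ Ψ := fun h => hwX (Or.inr h)
        have hwΦ : w ∉ Φ := fun h => hwX (Or.inl (Or.inr h))
        have hw₂Φ : w₂ ∉ Φ := fun h => hw₂ (Or.inl (Or.inr h))
        have hwSΨ : w ∈ sideOf G A Ψ := sideOf_adj_closed hzSΨ adjzw hwΨ
        have hw₂TΦ : w₂ ∈ sideOf G B Φ := sideOf_adj_closed hz₂TΦ adjz₂w₂ hw₂Φ
        have hΨX : Ψ ⊆ C ∩ R ∪ Φ ∪ Ψ := fun t ht => Or.inr ht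
        have hw₂SΨ : w₂ ∈ sideOf G A Ψ :=
          sideOf_conn_closed hwSΨ (cw₂w.symm.anti hΨX)
        have hcl : ∀ a ∈ sideOf G B Φ ∩ sideOf G A Ψ, ∀ b, G.Adj a b →
            b ∉ C ∩ R ∪ Φ ∪ Ψ → b ∈ sideOf G B Φ ∩ sideOf G A Ψ := by
          intro a ha b adj hb
          exact ⟨sideOf_adj_closed ha.1 adj (fun h => hb (Or.inl (Or.inr h))),
            sideOf_adj_closed ha.2 adj (fun h => hb (Or.inr h))⟩
        have hCgood : ∀ a ∈ sideOf G B Φ ∩ sideOf G A Ψ, a ∉ C ∩ R ∪ Φ ∪ Ψ → a ∉ C := by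
          intro a ha haX haC
          exact haX (Or.inl (Or.inl ⟨haC, Or.inr ha⟩))
        have hconn : Conn G C w₂ w := cw₂w.transfer hcl hCgood ⟨hw₂TΦ, hw₂SΨ⟩
        have final : Conn G C z z₂ :=
          ((Conn.single adjzw hzC hconn.2.1).trans hconn.symm).trans
            (Conn.single adjz₂w₂.symm hconn.1 hz₂C)
        exact separates_iff.mp hC'.1 z hzΦ hzC z₂ hz₂Ψ hz₂C final
  have hreg : C ⊆ R := by
    by_contra h
    have hne : C ∩ R ≠ C := by
      intro e
      exact h (fun t ht => ((e.symm ▸ ht : t ∈ C ∩ R)).2)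
    exact hC'.2 (C ∩ R) Set.inter_subset_left hne hDsep
  -- disjointness of the outer sides from C
  have hSΦC : ∀ u ∈ sideOf G A Φ, u ∉ C := by
    intro u hu huC
    rcases hreg huC with (h | h) | h
    · exact sideOf_not_mem hu h
    · rcases hΨΦsub h with h' | h'
      · exact sideOf_not_mem hu h'
      · exact sides_disjoint hΦ'.1 hu h'
    · exact sides_disjoint hΦ'.1 hu h.1
  have hTΨC : ∀ u ∈ sideOf G B Ψ, u ∉ C := by
    intro u hu huC
    rcases hreg huC with (h | h) | h
    · rcases hΦΨsub h with h' | h'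
      · exact sideOf_not_mem hu h'
      · exact sides_disjoint hΨ'.1 h' hu
    · exact sideOf_not_mem hu h
    · exact sides_disjoint hΨ'.1 h.2 hu
  -- walks within the outer sides avoid C
  have hconnSΦ : ∀ u ∈ sideOf G A Φ, ∃ a, a ∈ A ∧ a ∉ C ∧ Conn G C u a := by
    intro u hu
    obtain ⟨huΦ, a, haA, haΦ, hca⟩ := mem_sideOf.mp hu
    have haS : a ∈ sideOf G A Φ := mem_sideOf_self haA haΦ
    have hcl : ∀ x ∈ sideOf G A Φ, ∀ b, G.Adj x b → b ∉ Φ → b ∈ sideOf G A Φ :=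
      fun x hx b adj hb => sideOf_adj_closed hx adj hb
    have : Conn G C u a := hca.transfer hcl (fun x hx _ => hSΦC x hx) hu
    exact ⟨a, haA, hSΦC a haS, this⟩
  have hconnTΨ : ∀ u ∈ sideOf G B Ψ, ∃ b, b ∈ B ∧ b ∉ C ∧ Conn G C u b := by
    intro u hu
    obtain ⟨huΨ, b, hbB, hbΨ, hcb⟩ := mem_sideOf.mp hu
    have hbS : b ∈ sideOf G B Ψ := mem_sideOf_self hbB hbΨ
    have hcl : ∀ x ∈ sideOf G B Ψ, ∀ c, G.Adj x c → c ∉ Ψ → c ∈ sideOf G B Ψ :=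
      fun x hx c adj hc => sideOf_adj_closed hx adj hc
    have : Conn G C u b := hcb.transfer hcl (fun x hx _ => hTΨC x hx) hu
    exact ⟨b, hbB, hTΨC b hbS, this⟩
  -- (iii) minimality of C as an (A,B)-cut
  have minC : ∀ C' ⊆ C, C' ≠ C → ¬ Separates G A B C' := by
    have key : ∀ v ∈ C, ¬ Separates G A B (C \ {v}) := by
      intro v hvC
      have hne : C \ {v} ≠ C := by
        intro h
        have : v ∈ C \ {v} := h.symm ▸ hvC
        exact this.2 rfl
      have hnot := hC'.2 (C \ {v}) Set.diff_subset hne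
      rw [separates_iff] at hnot
      push_neg at hnot
      obtain ⟨p, hpΦ, hpC, q, hqΨ, hqC, cpq⟩ := hnot
      have hdsub : C \ {v} ⊆ C := Set.diff_subset
      -- connect A to p
      have hA : ∃ a, a ∈ A ∧ a ∉ C \ {v} ∧ Conn G (C \ {v}) a p := by
        rcases exists_nbr_side hΦ hpΦ with hpA | ⟨u, adj, hu⟩
        · exact ⟨p, hpA, hpC, Conn.refl hpC⟩
        · obtain ⟨a, haA, haC, cua⟩ := hconnSΦ u hu
          have cua' : Conn G (C \ {v}) u a := cua.anti hdsub
          exact ⟨a, haA, cua'.2.1, cua'.symm.trans (Conn.single adj.symm cua'.1 hpC)⟩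
      have hB : ∃ b, b ∈ B ∧ b ∉ C \ {v} ∧ Conn G (C \ {v}) q b := by
        rcases exists_nbr_sideB hΨ hqΨ with hqB | ⟨u, adj, hu⟩
        · exact ⟨q, hqB, hqC, Conn.refl hqC⟩
        · obtain ⟨b, hbB, hbC, cub⟩ := hconnTΨ u hu
          have cub' : Conn G (C \ {v}) u b := cub.anti hdsub
          exact ⟨b, hbB, cub'.2.1, (Conn.single adj hqC cub'.1).trans cub'⟩
      obtain ⟨a, haA, haC', cap⟩ := hA
      obtain ⟨b, hbB, hbC', cqb⟩ := hB
      intro hsep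
      exact separates_iff.mp hsep a haA haC' b hbB hbC' ((cap.trans cpq).trans cqb)
    intro C' hsub hne hsep
    obtain ⟨v, hvC, hvC'⟩ : ∃ v, v ∈ C ∧ v ∉ C' := by
      by_contra h
      push_neg at h
      exact hne (Set.Subset.antisymm hsub h)
    have : C' ⊆ C \ {v} := fun t ht => ⟨hsub ht, fun e => hvC' (e ▸ ht)⟩
    exact key v hvC (separates_mono this hsep)
  refine ⟨⟨sepC, minC⟩, ?_, ?_⟩
  -- (iv) side_A Φ ⊆ side_A C
  · intro u hu
    obtain ⟨a, haA, haC, c⟩ := hconnSΦ u hu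
    exact mem_sideOf.mpr ⟨hSΦC u hu, a, haA, haC, c⟩
  -- (v) side_A C ⊆ side_A Ψ
  · intro u hu
    obtain ⟨huC, a, haA, haC, c⟩ := mem_sideOf.mp hu
    rcases c.splitD Ψ with ⟨z, hzΨ, hzC, -, cza⟩ | cf
    · exfalso
      rcases exists_nbr_sideB hΨ hzΨ with hzB | ⟨u', adj, hu'⟩
      · exact separates_iff.mp sepC a haA haC z hzB hzC cza.symm
      · obtain ⟨b, hbB, hbC, cu'b⟩ := hconnTΨ u' hu'
        exact separates_iff.mp sepC a haA haC b hbB hbC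
          ((cza.symm.trans (Conn.single adj hzC cu'b.1)).trans cu'b)
    · have cf' : Conn G Ψ u a := cf.anti Set.subset_union_right
      exact mem_sideOf.mpr ⟨cf'.1, a, haA, cf'.2.1, cf'⟩


/-- Every separating set contains a minimal cut. -/
lemma exists_mincut_subset [Fintype V] {A B C : Set V} (h : Separates G A B C) :
    ∃ C', C' ⊆ C ∧ C' ∈ Mincut G A B := by
  generalize hn : C.ncard = n
  induction n using Nat.strong_induction_on generalizing C with
  | _ n ih =>
    by_cases hm : ∀ C' ⊆ C, C' ≠ C → ¬ Separates G A B C'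
    · exact ⟨C, subset_rfl, h, hm⟩
    · push_neg at hm
      obtain ⟨C', hsub, hne, hsep⟩ := hm
      have hlt : C'.ncard < n :=
        hn ▸ Set.ncard_lt_ncard (ssubset_of_subset_of_ne hsub hne) (Set.toFinite C)
      obtain ⟨C'', h1, h2⟩ := ih _ hlt hsep rfl
      exact ⟨C'', h1.trans hsub, h2⟩

/-- **Join lemma**: two minimal `(A,B)`-cuts have a least upper bound contained in their
union. -/
lemma join_lemma [Fintype V] {A B Φ Ψ : Set V} (hΦ : Φ ∈ Mincut G A B)
    (hΨ : Ψ ∈ Mincut G A B) :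
    ∃ J ∈ Mincut G A B, J ⊆ Φ ∪ Ψ ∧ sideOf G A Φ ⊆ sideOf G A J ∧
      sideOf G A Ψ ⊆ sideOf G A J ∧
      ∀ U ∈ Mincut G A B, sideOf G A Φ ⊆ sideOf G A U → sideOf G A Ψ ⊆ sideOf G A U →
        sideOf G A J ⊆ sideOf G A U := by
  have hΦ' : IsMincutBetween G A B Φ := hΦ
  have hΨ' : IsMincutBetween G A B Ψ := hΨ
  set S : Set V := sideOf G A Φ ∪ sideOf G A Ψ with hSdef
  set J0 : Set V := (Φ ∪ Ψ) \ S with hJ0def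
  have hBnotS : ∀ b ∈ B, b ∉ S := by
    rintro b hbB (hb | hb)
    · obtain ⟨hbΦ, a, haA, haΦ, hc⟩ := mem_sideOf.mp hb
      exact separates_iff.mp hΦ'.1 a haA haΦ b hbB hbΦ hc.symm
    · obtain ⟨hbΨ, a, haA, haΨ, hc⟩ := mem_sideOf.mp hb
      exact separates_iff.mp hΨ'.1 a haA haΨ b hbB hbΨ hc.symm
  have hScl : ∀ x ∈ S, ∀ y, G.Adj x y → y ∉ J0 → y ∈ S := by
    intro x hx y adj hy
    by_cases hyS : y ∈ S
    · exact hyS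
    · have hyΦΨ : y ∉ Φ ∪ Ψ := fun h => hy ⟨h, hyS⟩
      rcases hx with hx | hx
      · exact Or.inl (sideOf_adj_closed hx adj (fun h => hyΦΨ (Or.inl h)))
      · exact Or.inr (sideOf_adj_closed hx adj (fun h => hyΦΨ (Or.inr h)))
  have hJ0sep : Separates G A B J0 := by
    rw [separates_iff]
    intro a haA haJ b hbB hbJ hc
    have haS : a ∈ S := by
      by_cases haΦ : a ∈ Φ
      · by_contra haS
        exact haJ ⟨Or.inl haΦ, haS⟩
      · exact Or.inl (mem_sideOf_self haA haΦ)
    have hbS : b ∈ S := hc.invariant hScl haS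
    exact hBnotS b hbB hbS
  obtain ⟨J, hJsub0, hJmc⟩ := exists_mincut_subset hJ0sep
  have hJmc' : IsMincutBetween G A B J := hJmc
  have hJΦΨ : J ⊆ Φ ∪ Ψ := fun t ht => (hJsub0 ht).1
  have hSJ : ∀ u ∈ S, u ∉ J := fun u hu huJ => (hJsub0 huJ).2 hu
  -- S is contained in the A-side of J
  have hSside : ∀ u ∈ S, u ∈ sideOf G A J := by
    intro u hu
    have key : ∀ (Θ : Set V), u ∈ sideOf G A Θ → sideOf G A Θ ⊆ S → u ∈ sideOf G A J := by
      intro Θ huΘ hΘS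
      obtain ⟨huΘ', a, haA, haΘ, hc⟩ := mem_sideOf.mp huΘ
      have hcl : ∀ x ∈ sideOf G A Θ, ∀ b, G.Adj x b → b ∉ Θ → b ∈ sideOf G A Θ :=
        fun x hx b adj hb => sideOf_adj_closed hx adj hb
      have hcJ : Conn G J u a := hc.transfer hcl (fun x hx _ => hSJ x (hΘS hx)) huΘ
      exact mem_sideOf.mpr ⟨hSJ u hu, a, haA, hcJ.2.1, hcJ⟩
    rcases hu with hu | hu
    · exact key Φ hu (fun t ht => Or.inl ht)
    · exact key Ψ hu (fun t ht => Or.inr ht)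
  refine ⟨J, hJmc, hJΦΨ, fun u hu => hSside u (Or.inl hu), fun u hu => hSside u (Or.inr hu), ?_⟩
  -- leastness
  intro U hU hsΦ hsΨ u hu
  have hU' : IsMincutBetween G A B U := hU
  have hTUJ : ∀ w ∈ sideOf G B U, w ∉ J := by
    intro w hw hwJ
    rcases hJΦΨ hwJ with h | h
    · rcases subset_of_side_subset hΦ hsΦ h with h' | h'
      · exact sideOf_not_mem hw h'
      · exact sides_disjoint hU'.1 h' hw
    · rcases subset_of_side_subset hΨ hsΨ h with h' | h'
      · exact sideOf_not_mem hw h'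
      · exact sides_disjoint hU'.1 h' hw
  obtain ⟨huJ, a, haA, haJ, c⟩ := mem_sideOf.mp hu
  rcases c.splitD U with ⟨z, hzU, hzJ, -, cza⟩ | cf
  · exfalso
    rcases exists_nbr_sideB hU hzU with hzB | ⟨u', adj, hu'⟩
    · exact separates_iff.mp hJmc'.1 a haA haJ z hzB hzJ cza.symm
    · obtain ⟨hu'U, b, hbB, hbU, hcb⟩ := mem_sideOf.mp hu'
      have hcl : ∀ x ∈ sideOf G B U, ∀ c, G.Adj x c → c ∉ U → c ∈ sideOf G B U :=
        fun x hx c adj hc => sideOf_adj_closed hx adj hc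
      have hcbJ : Conn G J u' b := hcb.transfer hcl (fun x hx _ => hTUJ x hx) hu'
      exact separates_iff.mp hJmc'.1 a haA haJ b hbB hcbJ.2.1
        ((cza.symm.trans (Conn.single adj hzJ hcbJ.1)).trans hcbJ)
  · have cf' : Conn G U u a := cf.anti Set.subset_union_right
    exact mem_sideOf.mpr ⟨cf'.1, a, haA, cf'.2.1, cf'⟩

end MincutAux

open MincutAux

/-- Lemma `lem:mincut admissible`. `(Mincut(A,B), <)`, where
`Φ₁ < Φ₂ ↔ Φ₁^A ⊆ Φ₂^A ∧ Φ₁ ≠ Φ₂`, is an admissible pair for `Λ`. -/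
theorem mincut_admissiblePair {V : Type u} [Fintype V] (G : SimpleGraph V) (A B : Set V) :
    AdmissiblePair G (Mincut G A B)
      (fun Φ₁ Φ₂ => sideOf G A Φ₁ ⊆ sideOf G A Φ₂ ∧ Φ₁ ≠ Φ₂) := by
  set lt : Set V → Set V → Prop :=
    fun Φ₁ Φ₂ => sideOf G A Φ₁ ⊆ sideOf G A Φ₂ ∧ Φ₁ ≠ Φ₂ with hlt
  have rle_of : ∀ X Y : Set V, sideOf G A X ⊆ sideOf G A Y → RLe lt X Y := by
    intro X Y h
    by_cases e : X = Y
    · exact Or.inr e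
    · exact Or.inl ⟨h, e⟩
  have rle_to : ∀ X Y : Set V, RLe lt X Y → sideOf G A X ⊆ sideOf G A Y := by
    rintro X Y (⟨h, -⟩ | rfl)
    · exact h
    · exact subset_rfl
  refine ⟨?_, ?_, ?_, ?_, ?_, ?_⟩
  · rintro Φ - ⟨-, h⟩
    exact h rfl
  · rintro Φ₁ h₁ Φ₂ h₂ Φ₃ h₃ ⟨s12, n12⟩ ⟨s23, n23⟩
    refine ⟨s12.trans s23, fun e => n12 (side_inj h₁ h₂ (Set.Subset.antisymm s12 ?_))⟩
    rw [hlt] at *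
    have : sideOf G A Φ₂ ⊆ sideOf G A Φ₁ := by rw [e]; exact s23
    exact this
  · rintro Φ h₁ Ψ h₂ (⟨hs, -⟩ | ⟨hs, -⟩) C hC
    · obtain ⟨hCm, ha, hb⟩ := mincutMem h₁ h₂ hs hC
      exact ⟨hCm, Or.inl ⟨rle_of _ _ ha, rle_of _ _ hb⟩⟩
    · obtain ⟨hCm, ha, hb⟩ := mincutMem h₂ h₁ hs (mincut_symm hC)
      exact ⟨hCm, Or.inr ⟨rle_of _ _ ha, rle_of _ _ hb⟩⟩
  · rintro Φ₁ h₁ Φ₂ h₂ Φ₃ h₃ ⟨s12, -⟩ ⟨s23, -⟩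
    rw [separates_iff]
    intro x hx1 hx2 y hy3 hy2 hc
    have hxS : x ∈ sideOf G A Φ₂ := (subset_of_side_subset h₁ s12 hx1).resolve_left hx2
    have hyT : y ∈ sideOf G B Φ₂ := (subset_of_side_subset' h₂ h₃ s23 hy3).resolve_left hy2
    exact sides_disjoint h₂.1 (sideOf_conn_closed hxS hc) hyT
  · rintro Φ h₁ Ψ h₂ -
    obtain ⟨J, hJ, hsub, hA1, hA2, hleast⟩ := join_lemma h₁ h₂
    exact ⟨J, hJ, hsub, rle_of _ _ hA1, rle_of _ _ hA2,
      fun U hU r1 r2 => rle_of _ _ (hleast U hU (rle_to _ _ r1) (rle_to _ _ r2))⟩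
  · rintro Φ h₁ Ψ h₂ -
    obtain ⟨M, hM, hsub, hB1, hB2, hleast⟩ := join_lemma (mincut_symm h₁) (mincut_symm h₂)
    refine ⟨M, mincut_symm hM, hsub, rle_of _ _ (sideB_anti (mincut_symm h₁) hM hB1),
      rle_of _ _ (sideB_anti (mincut_symm h₂) hM hB2), ?_⟩
    intro U hU r1 r2
    have t1 : sideOf G B Φ ⊆ sideOf G B U := sideB_anti hU h₁ (rle_to _ _ r1)
    have t2 : sideOf G B Ψ ⊆ sideOf G B U := sideB_anti hU h₂ (rle_to _ _ r2)
    exact rle_of _ _ (sideB_anti hM (mincut_symm hU) (hleast U (mincut_symm hU) t1 t2))
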